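/- The map Φ sending f to the colouring v ↦ (f(v) mod 3) is a bijection from the set of graph homomorphisms f : Q_d → ℤ with f(v₀) = 0 (i.e., |f(x) − f(y)| = 1 for adjacent x, y) to the set of proper 3-colourings χ of Q_d with χ(v₀) = 0. -/

import Mathlib

/-- The `d`-dimensional hypercube graph. -/
def hypercube (d : ℕ) : SimpleGraph (Fin d → Bool) where
  Adj x y := ∃! i, x i ≠ y i
  symm := by
    constructor
    rintro x y ⟨i, hi, hu⟩
    exact ⟨i, Ne.symm hi, fun j hj => hu j (Ne.symm hj)⟩
  loopless := by
    constructor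
    rintro x ⟨i, hi, -⟩
    exact hi rfl

namespace HCaux

variable {d : ℕ}

/-- The `k`-th point on the canonical path from `v₀` to `v`. -/
def pv (v₀ v : Fin d → Bool) (k : ℕ) : Fin d → Bool :=
  fun i => if (i : ℕ) < k then v i else v₀ i

lemma pv_zero (v₀ v : Fin d → Bool) : pv v₀ v 0 = v₀ := by
  funext i; simp [pv]

lemma pv_last (v₀ v : Fin d → Bool) : pv v₀ v d = v := by
  funext i; simp [pv, i.isLt]

lemma pv_self (v₀ : Fin d → Bool) (k : ℕ) : pv v₀ v₀ k = v₀ := by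
  funext i; by_cases h : (i : ℕ) < k <;> simp [pv, h]

lemma pv_succ_ge {v₀ v : Fin d → Bool} {k : ℕ} (hk : d ≤ k) :
    pv v₀ v (k + 1) = pv v₀ v k := by
  funext i
  have h1 : (i : ℕ) < k := lt_of_lt_of_le i.isLt hk
  simp [pv, h1, Nat.lt_succ_of_lt h1]

lemma pv_succ_eq {v₀ v : Fin d → Bool} {k : ℕ} (hk : k < d)
    (h : v ⟨k, hk⟩ = v₀ ⟨k, hk⟩) : pv v₀ v (k + 1) = pv v₀ v k := by
  funext i
  rcases lt_trichotomy (i : ℕ) k with h1 | h1 | h1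
  · simp [pv, h1, Nat.lt_succ_of_lt h1]
  · have hik : i = ⟨k, hk⟩ := Fin.ext h1
    simp [pv, h1, hik, h]
  · have h2 : ¬ (i : ℕ) < k := by omega
    have h3 : ¬ (i : ℕ) < k + 1 := by omega
    simp [pv, h2, h3]

lemma pv_succ_adj {v₀ v : Fin d → Bool} {k : ℕ} (hk : k < d)
    (h : v ⟨k, hk⟩ ≠ v₀ ⟨k, hk⟩) :
    (hypercube d).Adj (pv v₀ v k) (pv v₀ v (k + 1)) := by
  refine ⟨⟨k, hk⟩, ?_, ?_⟩
  · show pv v₀ v k ⟨k, hk⟩ ≠ pv v₀ v (k + 1) ⟨k, hk⟩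
    simp only [pv, lt_irrefl, if_neg (lt_irrefl k), if_pos (Nat.lt_succ_self k)]
    exact fun he => h he.symm
  · intro j hj
    by_contra hne
    have hjk : (j : ℕ) ≠ k := fun he => hne (Fin.ext he)
    rcases lt_or_gt_of_ne hjk with h1 | h1
    · exact hj (by simp [pv, h1, Nat.lt_succ_of_lt h1])
    · have h2 : ¬ (j : ℕ) < k := by omega
      have h3 : ¬ (j : ℕ) < k + 1 := by omega
      exact hj (by simp [pv, h2, h3])

lemma pv_step (v₀ v : Fin d → Bool) (k : ℕ) :
    pv v₀ v (k + 1) = pv v₀ v k ∨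
      (hypercube d).Adj (pv v₀ v k) (pv v₀ v (k + 1)) := by
  by_cases hk : k < d
  · by_cases h : v ⟨k, hk⟩ = v₀ ⟨k, hk⟩
    · exact Or.inl (pv_succ_eq hk h)
    · exact Or.inr (pv_succ_adj hk h)
  · exact Or.inl (pv_succ_ge (le_of_not_gt hk))

lemma adj_ne {x y : Fin d → Bool} (h : (hypercube d).Adj x y) : x ≠ y :=
  fun he => (hypercube d).loopless.irrefl x (he ▸ h)

/-- The step value along an edge. -/
def stp (χ : (Fin d → Bool) → ZMod 3) (x y : Fin d → Bool) : ℤ :=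
  if x = y then 0 else if χ y = χ x + 1 then 1 else -1

lemma stp_self (χ : (Fin d → Bool) → ZMod 3) (x : Fin d → Bool) :
    stp χ x x = 0 := if_pos rfl

lemma stp_pm (χ : (Fin d → Bool) → ZMod 3) {x y : Fin d → Bool} (hxy : x ≠ y) :
    stp χ x y = 1 ∨ stp χ x y = -1 := by
  unfold stp
  rw [if_neg hxy]
  split <;> simp

lemma zmod3_cases : ∀ a b : ZMod 3, a ≠ b → b = a + 1 ∨ b = a + 2 := by decide

lemma stp_cast (χ : (Fin d → Bool) → ZMod 3) {x y : Fin d → Bool}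
    (hne : χ x ≠ χ y) (hxy : x ≠ y) :
    ((stp χ x y : ℤ) : ZMod 3) = χ y - χ x := by
  unfold stp
  rw [if_neg hxy]
  rcases zmod3_cases _ _ hne with h | h
  · rw [if_pos h, h]; push_cast; ring
  · have hne1 : χ y ≠ χ x + 1 := by
      rw [h]
      intro hc
      have : (2 : ZMod 3) = 1 := by
        have := add_left_cancel hc
        exact this
      exact absurd this (by decide)
    rw [if_neg hne1, h]
    have h2 : ((-1 : ℤ) : ZMod 3) = 2 := by decide
    rw [h2]; ring

/-- Partial sums along the canonical path. -/
def F (χ : (Fin d → Bool) → ZMod 3) (v₀ v : Fin d → Bool) (j : ℕ) : ℤ :=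
  ∑ k ∈ Finset.range j, stp χ (pv v₀ v k) (pv v₀ v (k + 1))

lemma F_succ (χ : (Fin d → Bool) → ZMod 3) (v₀ v : Fin d → Bool) (j : ℕ) :
    F χ v₀ v (j + 1) = F χ v₀ v j + stp χ (pv v₀ v j) (pv v₀ v (j + 1)) :=
  Finset.sum_range_succ _ _

lemma F_cast (χ : (Fin d → Bool) → ZMod 3)
    (hχ : ∀ a b, (hypercube d).Adj a b → χ a ≠ χ b)
    (v₀ v : Fin d → Bool) : ∀ j, ((F χ v₀ v j : ℤ) : ZMod 3) = χ (pv v₀ v j) - χ v₀ := by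
  intro j
  induction j with
  | zero => simp [F, pv_zero]
  | succ n ih =>
    rw [F_succ]
    push_cast
    rw [ih]
    rcases pv_step v₀ v n with h | h
    · rw [h, stp_self]; push_cast; ring
    · rw [stp_cast χ (hχ _ _ h) (adj_ne h)]; ring

lemma edge_abs (χ : (Fin d → Bool) → ZMod 3)
    (hχ : ∀ a b, (hypercube d).Adj a b → χ a ≠ χ b)
    (v₀ x y : Fin d → Bool) (hxy : (hypercube d).Adj x y) :
    F χ v₀ x d - F χ v₀ y d = 1 ∨ F χ v₀ x d - F χ v₀ y d = -1 := by
  obtain ⟨i, hi, hu⟩ := hxy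
  have hne : ∀ j : Fin d, j ≠ i → x j = y j := fun j hj => by
    by_contra h; exact hj (hu j h)
  -- the two canonical paths agree up to step i
  have hqr : ∀ k, k ≤ (i : ℕ) → pv v₀ x k = pv v₀ y k := by
    intro k hk
    funext j
    by_cases hj : (j : ℕ) < k
    · have hji : j ≠ i := by
        intro h; subst h; omega
      simp [pv, hj, hne j hji]
    · simp [pv, hj]
  -- after step i the two paths are adjacent (differ exactly at i)
  have hadjqr : ∀ j, (i : ℕ) < j → (hypercube d).Adj (pv v₀ x j) (pv v₀ y j) := by
    intro j hj
    refine ⟨i, ?_, ?_⟩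
    · show pv v₀ x j i ≠ pv v₀ y j i
      simp only [pv, if_pos hj]
      exact hi
    · intro m hm
      by_cases h1 : (m : ℕ) < j
      · simp only [pv, if_pos h1] at hm
        exact hu m hm
      · simp only [pv, if_neg h1] at hm
        exact absurd rfl hm
  have hcastD : ∀ j, ((F χ v₀ x j - F χ v₀ y j : ℤ) : ZMod 3)
      = χ (pv v₀ x j) - χ (pv v₀ y j) := by
    intro j
    push_cast
    rw [F_cast χ hχ v₀ x j, F_cast χ hχ v₀ y j]
    ring
  -- at steps k ≠ i, the two paths move simultaneously
  have hsim : ∀ k, k ≠ (i : ℕ) →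
      (pv v₀ x (k + 1) = pv v₀ x k ∧ pv v₀ y (k + 1) = pv v₀ y k) ∨
      ((hypercube d).Adj (pv v₀ x k) (pv v₀ x (k + 1)) ∧
        (hypercube d).Adj (pv v₀ y k) (pv v₀ y (k + 1))) := by
    intro k hk
    by_cases hkd : k < d
    · have hxyk : x ⟨k, hkd⟩ = y ⟨k, hkd⟩ := by
        refine hne _ (fun h => hk ?_)
        have := congrArg Fin.val h
        simpa using this
      by_cases hx : x ⟨k, hkd⟩ = v₀ ⟨k, hkd⟩
      · exact Or.inl ⟨pv_succ_eq hkd hx, pv_succ_eq hkd (by rw [← hxyk]; exact hx)⟩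
      · exact Or.inr ⟨pv_succ_adj hkd hx, pv_succ_adj hkd (by rw [← hxyk]; exact hx)⟩
    · exact Or.inl ⟨pv_succ_ge (le_of_not_gt hkd), pv_succ_ge (le_of_not_gt hkd)⟩
  -- base case at j = i + 1
  have hbase : F χ v₀ x ((i : ℕ) + 1) - F χ v₀ y ((i : ℕ) + 1) = 1 ∨
      F χ v₀ x ((i : ℕ) + 1) - F χ v₀ y ((i : ℕ) + 1) = -1 := by
    have hFi : F χ v₀ x (i : ℕ) = F χ v₀ y (i : ℕ) := by
      unfold F
      refine Finset.sum_congr rfl (fun k hk => ?_)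
      have hk' := Finset.mem_range.mp hk
      rw [hqr k (by omega), hqr (k + 1) (by omega)]
    rw [F_succ, F_succ, hFi]
    have heta : (⟨(i : ℕ), i.isLt⟩ : Fin d) = i := rfl
    by_cases hx : x i = v₀ i
    · have hyi : y i ≠ v₀ i := fun h => hi (hx.trans h.symm)
      have h1 : pv v₀ x ((i : ℕ) + 1) = pv v₀ x (i : ℕ) := by
        apply pv_succ_eq i.isLt
        rw [heta]; exact hx
      have h2 : (hypercube d).Adj (pv v₀ y (i : ℕ)) (pv v₀ y ((i : ℕ) + 1)) := by
        apply pv_succ_adj i.isLt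
        rw [heta]; exact hyi
      rw [h1, stp_self]
      rcases stp_pm χ (adj_ne h2) with h | h <;> rw [h] <;> [right; left] <;> ring
    · have hyi : y i = v₀ i := by
        have : ∀ a b c : Bool, a ≠ b → ¬ a = c → b = c := by decide
        exact this _ _ _ hi hx
      have h1 : pv v₀ y ((i : ℕ) + 1) = pv v₀ y (i : ℕ) := by
        apply pv_succ_eq i.isLt
        rw [heta]; exact hyi
      have h2 : (hypercube d).Adj (pv v₀ x (i : ℕ)) (pv v₀ x ((i : ℕ) + 1)) := by
        apply pv_succ_adj i.isLt
        rw [heta]; exact hx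
      rw [h1, stp_self]
      rcases stp_pm χ (adj_ne h2) with h | h <;> rw [h] <;> [left; right] <;> ring
  -- inductive step
  have hmain : ∀ m, (i : ℕ) + 1 + m ≤ d →
      (F χ v₀ x ((i : ℕ) + 1 + m) - F χ v₀ y ((i : ℕ) + 1 + m) = 1 ∨
       F χ v₀ x ((i : ℕ) + 1 + m) - F χ v₀ y ((i : ℕ) + 1 + m) = -1) := by
    intro m
    induction m with
    | zero => intro _; simpa using hbase
    | succ n ih =>
      intro hle
      have ihh := ih (by omega)
      set k := (i : ℕ) + 1 + n with hkdef
      have hki : k ≠ (i : ℕ) := by omega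
      have hrw : (i : ℕ) + 1 + (n + 1) = k + 1 := by omega
      rw [hrw, F_succ, F_succ]
      rcases hsim k hki with ⟨h1, h2⟩ | ⟨h1, h2⟩
      · rw [h1, h2, stp_self, stp_self]
        rcases ihh with h | h <;> [left; right] <;> omega
      · have hA := stp_pm χ (adj_ne h1)
        have hB := stp_pm χ (adj_ne h2)
        have hadj := hadjqr (k + 1) (by omega)
        have hnz : ((F χ v₀ x (k + 1) - F χ v₀ y (k + 1) : ℤ) : ZMod 3) ≠ 0 := by
          rw [hcastD (k + 1)]
          intro h
          exact hχ _ _ hadj (by rwa [sub_eq_zero] at h)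
        have h3 : ¬ (3 : ℤ) ∣ (F χ v₀ x (k + 1) - F χ v₀ y (k + 1)) := fun hdvd =>
          hnz ((ZMod.intCast_zmod_eq_zero_iff_dvd _ 3).mpr hdvd)
        rw [F_succ, F_succ] at h3
        rcases hA with hA | hA <;> rcases hB with hB | hB <;>
          rcases ihh with hD | hD <;> omega
  have hile : (i : ℕ) + 1 ≤ d := i.isLt
  have hfin := hmain (d - ((i : ℕ) + 1)) (by omega)
  have hrw : (i : ℕ) + 1 + (d - ((i : ℕ) + 1)) = d := by omega
  rwa [hrw] at hfin

end HCaux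

/-- The map `f ↦ (v ↦ f v mod 3)` is a bijection from the set of graph
homomorphisms `f : Q_d → ℤ` with `f v₀ = 0` to the set of proper 3-colourings
`χ` of `Q_d` with `χ v₀ = 0`. -/
theorem hom_to_Z_bijection_with_colourings (d : ℕ) (hd : 1 ≤ d)
    (v₀ : Fin d → Bool) :
    Set.BijOn (fun (f : (Fin d → Bool) → ℤ) => fun v => ((f v : ℤ) : ZMod 3))
      {f : (Fin d → Bool) → ℤ | f v₀ = 0 ∧
        ∀ x y, (hypercube d).Adj x y → |f x - f y| = 1}
      {χ : (Fin d → Bool) → ZMod 3 | (∀ x y, (hypercube d).Adj x y → χ x ≠ χ y) ∧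
        χ v₀ = 0} := by
  open HCaux in
  refine ⟨?_, ?_, ?_⟩
  · -- MapsTo
    rintro f ⟨hf0, hf⟩
    refine ⟨?_, ?_⟩
    · intro a b hab h
      have h1 := hf a b hab
      rw [abs_eq (by norm_num : (0:ℤ) ≤ 1)] at h1
      have h' : ((f a : ℤ) : ZMod 3) = ((f b : ℤ) : ZMod 3) := h
      have hc : ((f a - f b : ℤ) : ZMod 3) = 0 := by
        push_cast
        rw [h']; ring
      have hdvd := (ZMod.intCast_zmod_eq_zero_iff_dvd _ 3).mp hc
      omega
    · simp only
      rw [hf0]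
      simp
  · -- InjOn
    rintro f ⟨hf0, hf⟩ g ⟨hg0, hg⟩ hfg
    have hcast : ∀ v, ((f v : ℤ) : ZMod 3) = ((g v : ℤ) : ZMod 3) :=
      fun v => congrFun hfg v
    funext v
    have key : ∀ k, f (HCaux.pv v₀ v k) = g (HCaux.pv v₀ v k) := by
      intro k
      induction k with
      | zero => rw [HCaux.pv_zero, hf0, hg0]
      | succ n ih =>
        rcases HCaux.pv_step v₀ v n with h | h
        · rw [h]; exact ih
        · have h1 := hf _ _ h
          have h2 := hg _ _ h
          rw [abs_eq (by norm_num : (0:ℤ) ≤ 1)] at h1 h2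
          have hc : ((f (HCaux.pv v₀ v (n+1)) - g (HCaux.pv v₀ v (n+1)) : ℤ) : ZMod 3) = 0 := by
            push_cast
            rw [hcast]; ring
          have hdvd := (ZMod.intCast_zmod_eq_zero_iff_dvd _ 3).mp hc
          omega
    have := key d
    rwa [HCaux.pv_last] at this
  · -- SurjOn
    rintro χ ⟨hχ, hχ0⟩
    refine ⟨fun v => HCaux.F χ v₀ v d, ⟨?_, ?_⟩, ?_⟩
    · have hz : ∀ k, HCaux.stp χ (HCaux.pv v₀ v₀ k) (HCaux.pv v₀ v₀ (k+1)) = 0 := fun k => by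
        rw [HCaux.pv_self, HCaux.pv_self, HCaux.stp_self]
      simp [HCaux.F, hz]
    · intro a b hab
      rw [abs_eq (by norm_num : (0:ℤ) ≤ 1)]
      exact HCaux.edge_abs χ hχ v₀ a b hab
    · funext v
      simp only
      rw [HCaux.F_cast χ hχ v₀ v d, HCaux.pv_last, hχ0, sub_zero]
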